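/- If f : ℝ → (0, ∞) is a probability density such that ln f is ε-Lipschitz, then the additive noise mechanism A(x) = x + Z, where Z has density f, satisfies ε·d-privacy for d(x,x') = |x−x'|. -/
import Mathlib

open MeasureTheory Real

theorem stmt15 (ε : ℝ) (hε : 0 < ε) (f : ℝ → ℝ) (hpos : ∀ z, 0 < f z)
    (hint : ∫ z : ℝ, f z = 1)
    (hlip : ∀ z w : ℝ, |Real.log (f z) - Real.log (f w)| ≤ ε * |z - w|) :
    ∀ (x x' : ℝ) (S : Set ℝ), MeasurableSet S →
      volume.withDensity (fun z => ENNReal.ofReal (f (z - x))) S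
        ≤ ENNReal.ofReal (Real.exp (ε * |x - x'|)) *
          volume.withDensity (fun z => ENNReal.ofReal (f (z - x'))) S := by
  intro x x' S hS
  have key : ∀ z : ℝ, ENNReal.ofReal (f (z - x)) ≤
      ENNReal.ofReal (Real.exp (ε * |x - x'|)) * ENNReal.ofReal (f (z - x')) := by
    intro z
    rw [← ENNReal.ofReal_mul (Real.exp_nonneg _)]
    apply ENNReal.ofReal_le_ofReal
    have h1 : Real.log (f (z - x)) - Real.log (f (z - x')) ≤ ε * |x - x'| := by
      have := hlip (z - x) (z - x')
      have habs : |(z - x) - (z - x')| = |x - x'| := by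
        rw [show (z - x) - (z - x') = x' - x by ring, abs_sub_comm]
      rw [habs] at this
      exact (le_abs_self _).trans this
    calc f (z - x) = Real.exp (Real.log (f (z - x))) := (Real.exp_log (hpos _)).symm
      _ ≤ Real.exp (ε * |x - x'| + Real.log (f (z - x'))) := by
          apply Real.exp_le_exp.mpr; linarith
      _ = Real.exp (ε * |x - x'|) * f (z - x') := by
          rw [Real.exp_add, Real.exp_log (hpos _)]
  rw [withDensity_apply _ hS, withDensity_apply _ hS,
    ← lintegral_const_mul' _ _ ENNReal.ofReal_ne_top]
  exact lintegral_mono fun z => key z
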